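/- arXiv:1011.1313 — 4 statements merged into one kernel-verified Lean document; each statement's English description precedes it below -/
import Mathlib

section
/- Every Γ-invariant C² solution u of the Gauss equation Δu + 1 − e^{2u} − t²y⁴|φ(z)|²e^{−2u} = 0 satisfies inf_ℍ u ≥ −(1/2)·log(1 + Λ²), where Λ = sup_{z∈ℍ} λ(z) is the supremum of the principal curvature function λ(z) = t y²|φ(z)| e^{−2u(z)} (finite by Γ-invariance and cocompactness). In particular, if a sequence of solutions u_n with parameters t_n → 0 satisfies sup_ℍ |u_n| → ∞, then sup_ℍ λ_n → ∞, i.e., the principal curvatures (and the magnitudes of the intrinsic curvatures K_n = −1 − λ_n²) of the corresponding minimal immersions blow up. -/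
open Complex MeasureTheory Real Filter

noncomputable section

/-- The upper half-plane, viewed as a subset of `ℂ`. -/
def UH : Set ℂ := {z : ℂ | 0 < z.im}

/-- The Möbius action of `SL(2, ℝ)` on the upper half-plane (as a map on `ℂ`). -/
def moebius (γ : Matrix.SpecialLinearGroup (Fin 2) ℝ) (z : ℂ) : ℂ :=
  (((γ 0 0 : ℝ) : ℂ) * z + ((γ 0 1 : ℝ) : ℂ)) / (((γ 1 0 : ℝ) : ℂ) * z + ((γ 1 1 : ℝ) : ℂ))

/-- The hyperbolic Laplacian `Δu = y² (∂²u/∂x² + ∂²u/∂y²)`. -/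
def hypLap (u : ℂ → ℝ) (z : ℂ) : ℝ :=
  z.im ^ 2 * (iteratedFDeriv ℝ 2 u z ![1, 1] + iteratedFDeriv ℝ 2 u z ![Complex.I, Complex.I])

/-- The squared Euclidean gradient `|∇u|² = (∂u/∂x)² + (∂u/∂y)²`. -/
def gradSq (u : ℂ → ℝ) (z : ℂ) : ℝ :=
  (fderiv ℝ u z 1) ^ 2 + (fderiv ℝ u z Complex.I) ^ 2

/-- `u` is invariant under the Möbius action of the subgroup `Γ` on the upper half-plane. -/
def GammaInv (Γ : Subgroup (Matrix.SpecialLinearGroup (Fin 2) ℝ)) (u : ℂ → ℝ) : Prop :=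
  ∀ γ ∈ Γ, ∀ z ∈ UH, u (moebius γ z) = u z

/-- The Gauss equation `Δu + 1 - e^{2u} - t² y⁴ |φ(z)|² e^{-2u} = 0` on the upper half-plane. -/
def GaussEq (φ : ℂ → ℂ) (t : ℝ) (u : ℂ → ℝ) : Prop :=
  ∀ z ∈ UH, hypLap u z + 1 - Real.exp (2 * u z)
    - t ^ 2 * z.im ^ 4 * ‖φ z‖ ^ 2 * Real.exp (-2 * u z) = 0

/-- Integral over a fundamental domain `D` with respect to the hyperbolic
area measure `dμ = y⁻² dx dy`. -/
def hInt (D : Set ℂ) (f : ℂ → ℝ) : ℝ := ∫ z in D, f z * (z.im ^ 2)⁻¹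
open Topology

/-! ### Auxiliary lemmas -/

lemma contDiffAt_deriv_of_two {g : ℝ → ℝ} {x : ℝ} (hg : ContDiffAt ℝ 2 g x) :
    ContDiffAt ℝ 1 (deriv g) x := by
  have h1 : ContDiffAt ℝ 1 (fderiv ℝ g) x := hg.fderiv_right (by norm_num)
  have h2 : ContDiffAt ℝ 1 (fun y => fderiv ℝ g y 1) x :=
    (ContinuousLinearMap.apply ℝ ℝ (1:ℝ)).contDiff.contDiffAt.comp x h1
  exact h2

lemma second_deriv_test_min {g : ℝ → ℝ} (hg : ContDiffAt ℝ 2 g 0)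
    (hmin : IsLocalMin g 0) : 0 ≤ deriv (deriv g) 0 := by
  by_contra hneg
  push_neg at hneg
  have hg1 : deriv g 0 = 0 := hmin.deriv_eq_zero
  have hcd : ContDiffAt ℝ 1 (deriv g) 0 := contDiffAt_deriv_of_two hg
  have hd : HasDerivAt (deriv g) (deriv (deriv g) 0) 0 :=
    (hcd.differentiableAt one_ne_zero).hasDerivAt
  have hslope : Tendsto (slope (deriv g) 0) (𝓝[≠] 0) (𝓝 (deriv (deriv g) 0)) :=
    hasDerivAt_iff_tendsto_slope.1 hd
  have hev : ∀ᶠ x in 𝓝[≠] (0:ℝ), slope (deriv g) 0 x < 0 :=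
    hslope (Iio_mem_nhds hneg)
  obtain ⟨U, hU, hgU⟩ := hg.contDiffOn le_rfl (by simp)
  rw [eventually_nhdsWithin_iff] at hev
  have hmin' : ∀ᶠ x in 𝓝 (0:ℝ), g 0 ≤ g x := hmin
  have hall : ∀ᶠ x in 𝓝 (0:ℝ),
      (x ∈ ({0}ᶜ : Set ℝ) → slope (deriv g) 0 x < 0) ∧ g 0 ≤ g x ∧ x ∈ U :=
    hev.and (hmin'.and hU)
  obtain ⟨ε, hε, hball⟩ := Metric.eventually_nhds_iff_ball.1 hall
  set δ := ε/2 with hδ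
  have hδ0 : 0 < δ := by positivity
  have hsub : Set.Icc (0:ℝ) δ ⊆ Metric.ball (0:ℝ) ε := by
    intro x hx
    simp only [Metric.mem_ball, Real.dist_eq, sub_zero]
    rw [_root_.abs_of_nonneg hx.1]
    linarith [hx.2]
  have hderivneg : ∀ x ∈ interior (Set.Icc (0:ℝ) δ), deriv g x < 0 := by
    intro x hx
    rw [interior_Icc] at hx
    have hx0 : x ≠ 0 := ne_of_gt hx.1
    have hxb : x ∈ Metric.ball (0:ℝ) ε := hsub ⟨le_of_lt hx.1, le_of_lt hx.2⟩
    have := (hball x hxb).1 hx0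
    rw [slope_def_field] at this
    have : (deriv g x - deriv g 0) / (x - 0) < 0 := by
      simpa [div_eq_inv_mul, slope] using this
    rw [hg1, sub_zero, sub_zero] at this
    rcases div_neg_iff.1 this with h | h
    · linarith [h.2, hx.1]
    · exact h.1
  have hdiff : DifferentiableOn ℝ g (Metric.ball (0:ℝ) ε) := by
    have : ContDiffOn ℝ 2 g (Metric.ball (0:ℝ) ε) :=
      hgU.mono (fun x hx => (hball x hx).2.2)
    exact this.differentiableOn (by norm_num)
  have hcont : ContinuousOn g (Set.Icc (0:ℝ) δ) :=
    (hdiff.continuousOn).mono hsub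
  have hanti : StrictAntiOn g (Set.Icc (0:ℝ) δ) := by
    apply strictAntiOn_of_deriv_neg (convex_Icc _ _) hcont
    intro x hx
    exact hderivneg x hx
  have h1 : g δ < g 0 :=
    hanti (Set.left_mem_Icc.2 (le_of_lt hδ0)) (Set.right_mem_Icc.2 (le_of_lt hδ0)) hδ0
  have h2 : g 0 ≤ g δ := (hball δ (hsub (Set.right_mem_Icc.2 (le_of_lt hδ0)))).2.1
  linarith

lemma line_hasDerivAt (z v : ℂ) (s : ℝ) : HasDerivAt (fun s : ℝ => z + s • v) v s := by
  simpa using ((hasDerivAt_id s).smul_const v).const_add z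

lemma line_contDiffAt {u : ℂ → ℝ} {z : ℂ} (v : ℂ) (hu : ContDiffAt ℝ 2 u z) :
    ContDiffAt ℝ 2 (fun s : ℝ => u (z + s • v)) 0 := by
  have hL : ContDiffAt ℝ 2 (fun s : ℝ => z + s • v) 0 :=
    (contDiff_const.add (contDiff_id.smul contDiff_const)).contDiffAt
  have hu' : ContDiffAt ℝ 2 u (z + (0:ℝ) • v) := by
    rw [show z + (0:ℝ) • v = z by simp]; exact hu
  exact ContDiffAt.comp 0 hu' hL

lemma line_second_deriv {u : ℂ → ℝ} {z : ℂ} (v : ℂ) (hu : ContDiffAt ℝ 2 u z) :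
    deriv (deriv (fun s : ℝ => u (z + s • v))) 0 = iteratedFDeriv ℝ 2 u z ![v, v] := by
  obtain ⟨U, hU, hgU⟩ := hu.contDiffOn le_rfl (by simp)
  set W := interior U with hW
  have hWo : IsOpen W := isOpen_interior
  have hzW : z ∈ W := mem_interior_iff_mem_nhds.2 hU
  have hdiffW : DifferentiableOn ℝ u W :=
    (hgU.mono interior_subset).differentiableOn (by norm_num)
  have hLcont : Continuous (fun s : ℝ => z + s • v) := by continuity
  have hevW : ∀ᶠ s in 𝓝 (0:ℝ), z + s • v ∈ W := by
    have h := hLcont.continuousAt (x := (0:ℝ))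
    have hm : W ∈ 𝓝 (z + (0:ℝ) • v) := by
      rw [show z + (0:ℝ) • v = z by simp]; exact hWo.mem_nhds hzW
    exact h.preimage_mem_nhds hm
  have hderiv : ∀ᶠ s in 𝓝 (0:ℝ),
      deriv (fun s : ℝ => u (z + s • v)) s = fderiv ℝ u (z + s • v) v := by
    filter_upwards [hevW] with s hs
    have hu' : HasFDerivAt u (fderiv ℝ u (z + s • v)) (z + s • v) :=
      ((hdiffW.differentiableAt (hWo.mem_nhds hs)))|>.hasFDerivAt
    exact (hu'.comp_hasDerivAt s (line_hasDerivAt z v s)).deriv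
  have heq : deriv (deriv (fun s : ℝ => u (z + s • v))) 0
      = deriv (fun s : ℝ => fderiv ℝ u (z + s • v) v) 0 :=
    Filter.EventuallyEq.deriv_eq hderiv
  rw [heq]
  have hf1 : ContDiffAt ℝ 1 (fderiv ℝ u) z := hu.fderiv_right (by norm_num)
  have hA : HasFDerivAt (fderiv ℝ u) (fderiv ℝ (fderiv ℝ u) z) z :=
    (hf1.differentiableAt one_ne_zero).hasFDerivAt
  have hAd : HasDerivAt (fun s : ℝ => fderiv ℝ u (z + s • v)) (fderiv ℝ (fderiv ℝ u) z v) 0 := by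
    have hA' : HasFDerivAt (fderiv ℝ u) (fderiv ℝ (fderiv ℝ u) z) (z + (0:ℝ) • v) := by
      rw [show z + (0:ℝ) • v = z by simp]; exact hA
    have := hA'.comp_hasDerivAt 0 (line_hasDerivAt z v 0)
    exact this
  have hfin : HasDerivAt (fun s : ℝ => fderiv ℝ u (z + s • v) v)
      (fderiv ℝ (fderiv ℝ u) z v v) 0 :=
    (ContinuousLinearMap.apply ℝ ℝ v).hasFDerivAt.comp_hasDerivAt 0 hAd
  rw [hfin.deriv, iteratedFDeriv_two_apply]
  simp

lemma iteratedFDeriv_nonneg_of_min {u : ℂ → ℝ} {z : ℂ} {S : Set ℂ} (hS : IsOpen S)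
    (hz : z ∈ S) (hu : ContDiffAt ℝ 2 u z) (hmin : ∀ w ∈ S, u z ≤ u w) (v : ℂ) :
    0 ≤ iteratedFDeriv ℝ 2 u z ![v, v] := by
  have hevW : ∀ᶠ s in 𝓝 (0:ℝ), z + s • v ∈ S := by
    have hLcont : Continuous (fun s : ℝ => z + s • v) := by continuity
    have hm : S ∈ 𝓝 (z + (0:ℝ) • v) := by
      rw [show z + (0:ℝ) • v = z by simp]; exact hS.mem_nhds hz
    exact (hLcont.continuousAt (x := (0:ℝ))).preimage_mem_nhds hm
  have hloc : IsLocalMin (fun s : ℝ => u (z + s • v)) 0 := by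
    filter_upwards [hevW] with s hs
    simpa using hmin _ hs
  rw [← line_second_deriv v hu]
  exact second_deriv_test_min (line_contDiffAt v hu) hloc

lemma iteratedFDeriv_nonpos_of_max {u : ℂ → ℝ} {z : ℂ} {S : Set ℂ} (hS : IsOpen S)
    (hz : z ∈ S) (hu : ContDiffAt ℝ 2 u z) (hmax : ∀ w ∈ S, u w ≤ u z) (v : ℂ) :
    iteratedFDeriv ℝ 2 u z ![v, v] ≤ 0 := by
  have h := iteratedFDeriv_nonneg_of_min hS hz hu.neg (fun w hw => neg_le_neg (hmax w hw)) v
  have hneg : iteratedFDeriv ℝ 2 (fun w => -u w) z ![v, v]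
      = -(iteratedFDeriv ℝ 2 u z ![v, v]) := by
    have h' : (fun w => -u w) = -u := rfl
    rw [h', iteratedFDeriv_neg_apply]; rfl
  rw [hneg] at h
  linarith

lemma det_entries (γ : Matrix.SpecialLinearGroup (Fin 2) ℝ) :
    γ 0 0 * γ 1 1 - γ 0 1 * γ 1 0 = 1 := by
  have h := γ.property
  rwa [Matrix.det_fin_two] at h

lemma moebius_denom_ne_zero (γ : Matrix.SpecialLinearGroup (Fin 2) ℝ) {z : ℂ}
    (hz : 0 < z.im) : ((γ 1 0 : ℝ) : ℂ) * z + ((γ 1 1 : ℝ) : ℂ) ≠ 0 := by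
  intro h
  have him : (((γ 1 0 : ℝ) : ℂ) * z + ((γ 1 1 : ℝ) : ℂ)).im = 0 := by rw [h]; simp
  have hre : (((γ 1 0 : ℝ) : ℂ) * z + ((γ 1 1 : ℝ) : ℂ)).re = 0 := by rw [h]; simp
  simp [Complex.add_im, Complex.mul_im] at him
  have hc : γ 1 0 = 0 := by
    rcases him with h | h
    · exact h
    · exact absurd h (ne_of_gt hz)
  simp [Complex.add_re, Complex.mul_re, hc] at hre
  have hd := det_entries γ
  rw [hc, hre] at hd
  simp at hd

lemma moebius_im (γ : Matrix.SpecialLinearGroup (Fin 2) ℝ) {z : ℂ} (hz : 0 < z.im) :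
    (moebius γ z).im = z.im / Complex.normSq (((γ 1 0 : ℝ) : ℂ) * z + ((γ 1 1 : ℝ) : ℂ)) := by
  have hd := moebius_denom_ne_zero γ hz
  have hns : Complex.normSq (((γ 1 0 : ℝ) : ℂ) * z + ((γ 1 1 : ℝ) : ℂ)) ≠ 0 :=
    fun h => hd (Complex.normSq_eq_zero.1 h)
  have hdet := det_entries γ
  rw [moebius, Complex.div_im, ← sub_div]
  congr 1
  simp only [Complex.add_im, Complex.add_re, Complex.mul_im, Complex.mul_re, Complex.ofReal_re, Complex.ofReal_im]
  linear_combination z.im * hdet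

lemma moebius_mem_UH (γ : Matrix.SpecialLinearGroup (Fin 2) ℝ) {z : ℂ} (hz : z ∈ UH) :
    moebius γ z ∈ UH := by
  have hz' : 0 < z.im := hz
  have h := moebius_im γ hz'
  have hpos : 0 < Complex.normSq (((γ 1 0 : ℝ) : ℂ) * z + ((γ 1 1 : ℝ) : ℂ)) :=
    Complex.normSq_pos.2 (moebius_denom_ne_zero γ hz')
  show 0 < (moebius γ z).im
  rw [h]
  positivity

lemma weight_inv (φ : ℂ → ℂ) (γ : Matrix.SpecialLinearGroup (Fin 2) ℝ) {z : ℂ} (hz : z ∈ UH)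
    (hφγ : φ (moebius γ z)
      = (((γ 1 0 : ℝ) : ℂ) * z + ((γ 1 1 : ℝ) : ℂ)) ^ 4 * φ z) :
    (moebius γ z).im ^ 2 * ‖φ (moebius γ z)‖ = z.im ^ 2 * ‖φ z‖ := by
  have hz' : 0 < z.im := hz
  set w := (((γ 1 0 : ℝ) : ℂ) * z + ((γ 1 1 : ℝ) : ℂ)) with hw
  have hwne : w ≠ 0 := moebius_denom_ne_zero γ hz'
  have hns : Complex.normSq w ≠ 0 := fun h => hwne (Complex.normSq_eq_zero.1 h)
  rw [moebius_im γ hz', hφγ, norm_mul, norm_pow]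
  have habs : ‖w‖ ^ 4 = (Complex.normSq w) ^ 2 := by
    rw [show (4:ℕ) = 2*2 from rfl, pow_mul, Complex.sq_norm]
  rw [div_pow, habs]
  field_simp
  rw [← hw, mul_div_right_comm, div_self (pow_ne_zero 2 hns), one_mul]

lemma image_UH_eq_image_K {Γ : Subgroup (Matrix.SpecialLinearGroup (Fin 2) ℝ)}
    {f : ℂ → ℝ} {K : Set ℂ}
    (hKU : K ⊆ UH) (hcov : ∀ z ∈ UH, ∃ γ ∈ Γ, moebius γ z ∈ K)
    (hinv : ∀ γ ∈ Γ, ∀ z ∈ UH, f (moebius γ z) = f z) :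
    f '' UH = f '' K := by
  apply Set.Subset.antisymm
  · rintro _ ⟨z, hz, rfl⟩
    obtain ⟨γ, hγ, hK⟩ := hcov z hz
    exact ⟨moebius γ z, hK, hinv γ hγ z hz⟩
  · exact Set.image_mono hKU

lemma I_mem_UH : Complex.I ∈ UH := by
  show (0:ℝ) < Complex.I.im
  simp

lemma UH_open : IsOpen UH := by
  have : UH = Complex.im ⁻¹' Set.Ioi 0 := rfl
  rw [this]
  exact isOpen_Ioi.preimage Complex.continuous_im

/-- Extrema of a Γ-invariant continuous function are attained. -/
lemma extrema_of_inv {Γ : Subgroup (Matrix.SpecialLinearGroup (Fin 2) ℝ)}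
    {K : Set ℂ} (hKU : K ⊆ UH) (hKc : IsCompact K)
    (hcov : ∀ z ∈ UH, ∃ γ ∈ Γ, moebius γ z ∈ K) {f : ℂ → ℝ}
    (hf : ContinuousOn f UH)
    (hinv : ∀ γ ∈ Γ, ∀ z ∈ UH, f (moebius γ z) = f z) :
    ∃ z₀ ∈ UH, ∃ z₁ ∈ UH, (∀ z ∈ UH, f z₀ ≤ f z) ∧ (∀ z ∈ UH, f z ≤ f z₁) ∧
      sInf (f '' UH) = f z₀ ∧ sSup (f '' UH) = f z₁ := by
  have himg := image_UH_eq_image_K hKU hcov hinv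
  obtain ⟨γI, hγI, hKI⟩ := hcov Complex.I I_mem_UH
  have hKne : K.Nonempty := ⟨_, hKI⟩
  have hfK : ContinuousOn f K := hf.mono hKU
  obtain ⟨z₀, hz₀K, hmin⟩ := hKc.exists_isMinOn hKne hfK
  obtain ⟨z₁, hz₁K, hmax⟩ := hKc.exists_isMaxOn hKne hfK
  have hz₀ : z₀ ∈ UH := hKU hz₀K
  have hz₁ : z₁ ∈ UH := hKU hz₁K
  have hgmin : ∀ z ∈ UH, f z₀ ≤ f z := by
    intro z hz
    obtain ⟨γ, hγ, hK⟩ := hcov z hz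
    have h' : f z₀ ≤ f (moebius γ z) := hmin hK
    rwa [hinv γ hγ z hz] at h'
  have hgmax : ∀ z ∈ UH, f z ≤ f z₁ := by
    intro z hz
    obtain ⟨γ, hγ, hK⟩ := hcov z hz
    have h' : f (moebius γ z) ≤ f z₁ := hmax hK
    rwa [hinv γ hγ z hz] at h'
  refine ⟨z₀, hz₀, z₁, hz₁, hgmin, hgmax, ?_, ?_⟩
  · apply le_antisymm
    · have hbb : BddBelow (f '' UH) := by
        rw [himg]; exact (hKc.image_of_continuousOn hfK).bddBelow
      exact csInf_le hbb ⟨z₀, hz₀, rfl⟩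
    · exact le_csInf ⟨f z₀, ⟨z₀, hz₀, rfl⟩⟩ (by rintro _ ⟨z, hz, rfl⟩; exact hgmin z hz)
  · apply le_antisymm
    · exact csSup_le ⟨f z₁, ⟨z₁, hz₁, rfl⟩⟩ (by rintro _ ⟨z, hz, rfl⟩; exact hgmax z hz)
    · have hba : BddAbove (f '' UH) := by
        rw [himg]; exact (hKc.image_of_continuousOn hfK).bddAbove
      exact le_csSup hba ⟨z₁, hz₁, rfl⟩

/-- The grand auxiliary lemma: all per-solution estimates. -/
lemma main_aux {Γ : Subgroup (Matrix.SpecialLinearGroup (Fin 2) ℝ)}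
    {K : Set ℂ} (hKU : K ⊆ UH) (hKc : IsCompact K)
    (hcov : ∀ z ∈ UH, ∃ γ ∈ Γ, moebius γ z ∈ K)
    (φ : ℂ → ℂ) (hφ : DifferentiableOn ℂ φ UH)
    (hφeq : ∀ γ ∈ Γ, ∀ z ∈ UH,
      φ (moebius γ z) = (((γ 1 0 : ℝ) : ℂ) * z + ((γ 1 1 : ℝ) : ℂ)) ^ 4 * φ z)
    (t : ℝ) (ht : 0 ≤ t) (u : ℂ → ℝ) (hu : ContDiffOn ℝ 2 u UH)
    (hinv : GammaInv Γ u) (hgauss : GaussEq φ t u) :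
    0 ≤ sSup ((fun z => t * z.im ^ 2 * ‖φ z‖ * Real.exp (-2 * u z)) '' UH) ∧
    -(1 / 2) * Real.log (1 +
        (sSup ((fun z => t * z.im ^ 2 * ‖φ z‖ * Real.exp (-2 * u z)) '' UH)) ^ 2)
      ≤ sInf (u '' UH) ∧
    sSup ((fun z => |u z|) '' UH) ≤ (1 / 2) * Real.log (1 +
        (sSup ((fun z => t * z.im ^ 2 * ‖φ z‖ * Real.exp (-2 * u z)) '' UH)) ^ 2) ∧
    sSup ((fun z => t * z.im ^ 2 * ‖φ z‖ * Real.exp (-2 * u z)) '' UH) - 1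
      ≤ sSup ((fun z =>
          |(-1 : ℝ) - (t * z.im ^ 2 * ‖φ z‖ * Real.exp (-2 * u z)) ^ 2|) '' UH) := by
  set lam : ℂ → ℝ := fun z => t * z.im ^ 2 * ‖φ z‖ * Real.exp (-2 * u z) with hlam
  set Λ : ℝ := sSup (lam '' UH) with hΛ
  -- continuity of relevant functions on UH
  have hucont : ContinuousOn u UH := hu.continuousOn
  have hlamcont : ContinuousOn lam UH := by
    apply ContinuousOn.mul
    · apply ContinuousOn.mul
      · exact (continuous_const.mul ((Complex.continuous_im.pow 2))).continuousOn
      · exact continuous_norm.comp_continuousOn hφ.continuousOn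
    · exact Real.continuous_exp.comp_continuousOn ((continuous_const.continuousOn).mul hucont)
  -- invariance of lam
  have hlaminv : ∀ γ ∈ Γ, ∀ z ∈ UH, lam (moebius γ z) = lam z := by
    intro γ hγ z hz
    have hw := weight_inv φ γ hz (hφeq γ hγ z hz)
    simp only [hlam]
    rw [hinv γ hγ z hz]
    calc t * (moebius γ z).im ^ 2 * ‖φ (moebius γ z)‖ * Real.exp (-2 * u z)
        = t * ((moebius γ z).im ^ 2 * ‖φ (moebius γ z)‖) * Real.exp (-2 * u z) := by
          ring
      _ = t * (z.im ^ 2 * ‖φ z‖) * Real.exp (-2 * u z) := by rw [hw]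
      _ = t * z.im ^ 2 * ‖φ z‖ * Real.exp (-2 * u z) := by ring
  -- extrema of u
  obtain ⟨z₀, hz₀, z₁, hz₁, humin, humax, hInf, hSup⟩ :=
    extrema_of_inv hKU hKc hcov hucont hinv
  -- bddAbove of lam image
  have hlamimg := image_UH_eq_image_K hKU hcov hlaminv
  have hlambdd : BddAbove (lam '' UH) := by
    rw [hlamimg]
    exact (hKc.image_of_continuousOn (hlamcont.mono hKU)).bddAbove
  have hlamne : (lam '' UH).Nonempty := ⟨lam Complex.I, Complex.I, I_mem_UH, rfl⟩
  have hlam0 : ∀ z ∈ UH, 0 ≤ lam z := by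
    intro z hz
    simp only [hlam]
    have h1 : (0:ℝ) ≤ ‖φ z‖ := norm_nonneg _
    have h2 : (0:ℝ) ≤ Real.exp (-2 * u z) := (Real.exp_pos _).le
    positivity
  have hΛ0 : 0 ≤ Λ :=
    le_trans (hlam0 Complex.I I_mem_UH) (le_csSup hlambdd ⟨Complex.I, I_mem_UH, rfl⟩)
  -- Gauss equation identity
  have hTid : ∀ z : ℂ, t ^ 2 * z.im ^ 4 * ‖φ z‖ ^ 2 * Real.exp (-2 * u z)
      = (lam z) ^ 2 * Real.exp (2 * u z) := by
    intro z
    have hEE : Real.exp (-2 * u z) * Real.exp (-2 * u z) * Real.exp (2 * u z)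
        = Real.exp (-2 * u z) := by
      rw [← Real.exp_add, ← Real.exp_add]
      congr 1
      ring
    simp only [hlam]
    nlinarith [hEE, sq_nonneg (t * z.im ^ 2 * ‖φ z‖)]
  -- lower bound at the min
  have hmin_bound : -(1 / 2) * Real.log (1 + Λ ^ 2) ≤ u z₀ := by
    have hca : ContDiffAt ℝ 2 u z₀ := hu.contDiffAt (UH_open.mem_nhds hz₀)
    have h1 : 0 ≤ iteratedFDeriv ℝ 2 u z₀ ![1, 1] :=
      iteratedFDeriv_nonneg_of_min UH_open hz₀ hca humin 1
    have h2 : 0 ≤ iteratedFDeriv ℝ 2 u z₀ ![Complex.I, Complex.I] :=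
      iteratedFDeriv_nonneg_of_min UH_open hz₀ hca humin Complex.I
    have hL : 0 ≤ hypLap u z₀ := by
      simp only [hypLap]
      have := sq_nonneg z₀.im
      positivity
    have heq := hgauss z₀ hz₀
    rw [hTid z₀] at heq
    have hE : Real.exp (2 * u z₀) * (1 + (lam z₀) ^ 2) ≥ 1 := by nlinarith
    have hlamle : lam z₀ ≤ Λ := le_csSup hlambdd ⟨z₀, hz₀, rfl⟩
    have hl0 : 0 ≤ lam z₀ := hlam0 z₀ hz₀
    have hE2 : (1 + Λ ^ 2)⁻¹ ≤ Real.exp (2 * u z₀) := by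
      have hpos : (0:ℝ) < 1 + Λ ^ 2 := by positivity
      rw [inv_le_iff_one_le_mul₀ hpos]
      nlinarith [Real.exp_pos (2 * u z₀)]
    have hlog := Real.log_le_log (by positivity) hE2
    rw [Real.log_exp, Real.log_inv] at hlog
    linarith
  -- upper bound at the max
  have hmax_bound : u z₁ ≤ 0 := by
    have hca : ContDiffAt ℝ 2 u z₁ := hu.contDiffAt (UH_open.mem_nhds hz₁)
    have h1 : iteratedFDeriv ℝ 2 u z₁ ![1, 1] ≤ 0 :=
      iteratedFDeriv_nonpos_of_max UH_open hz₁ hca humax 1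
    have h2 : iteratedFDeriv ℝ 2 u z₁ ![Complex.I, Complex.I] ≤ 0 :=
      iteratedFDeriv_nonpos_of_max UH_open hz₁ hca humax Complex.I
    have hL : hypLap u z₁ ≤ 0 := by
      simp only [hypLap]
      have hy : 0 ≤ z₁.im ^ 2 := sq_nonneg _
      nlinarith
    have heq := hgauss z₁ hz₁
    rw [hTid z₁] at heq
    have hE : Real.exp (2 * u z₁) ≤ 1 := by
      nlinarith [Real.exp_pos (2 * u z₁), sq_nonneg (lam z₁)]
    have := Real.exp_le_one_iff.1 hE
    linarith
  have hz₀z₁ : u z₀ ≤ 0 := le_trans (humin z₁ hz₁) hmax_bound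
  refine ⟨hΛ0, ?_, ?_, ?_⟩
  · rw [hInf]; exact hmin_bound
  · -- sSup |u| ≤ (1/2) log (1+Λ²)
    have habs : ∀ z ∈ UH, |u z| ≤ -u z₀ := by
      intro z hz
      rw [abs_le]
      constructor
      · have := humin z hz; linarith
      · have := humax z hz; linarith
    have hS : sSup ((fun z => |u z|) '' UH) ≤ -u z₀ := by
      refine csSup_le ⟨|u Complex.I|, ⟨Complex.I, I_mem_UH, rfl⟩⟩ ?_
      rintro _ ⟨z, hz, rfl⟩
      exact habs z hz
    linarith [hmin_bound, hS]
  · -- Λ - 1 ≤ sSup |−1−lam²|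
    set g : ℂ → ℝ := fun z => |(-1 : ℝ) - (lam z) ^ 2| with hg
    have hginv : ∀ γ ∈ Γ, ∀ z ∈ UH, g (moebius γ z) = g z := by
      intro γ hγ z hz
      simp only [hg, hlaminv γ hγ z hz]
    have hgcont : ContinuousOn g UH := by
      apply ContinuousOn.abs
      exact (continuousOn_const).sub (hlamcont.pow 2)
    have hgimg := image_UH_eq_image_K hKU hcov hginv
    have hgbdd : BddAbove (g '' UH) := by
      rw [hgimg]
      exact (hKc.image_of_continuousOn (hgcont.mono hKU)).bddAbove
    obtain ⟨a, ⟨z, hz, rfl⟩, hlt⟩ := exists_lt_of_lt_csSup hlamne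
      (show Λ - 1 < Λ by linarith)
    have hgz : g z = 1 + (lam z) ^ 2 := by
      simp only [hg]
      rw [abs_of_nonpos (by nlinarith [sq_nonneg (lam z)])]
      ring
    have hle : g z ≤ sSup (g '' UH) := le_csSup hgbdd ⟨z, hz, rfl⟩
    have : Λ - 1 ≤ g z := by
      rw [hgz]
      nlinarith [sq_nonneg (lam z - 1)]
    linarith

theorem inf_bound_and_curvature_blow_up
    (Γ : Subgroup (Matrix.SpecialLinearGroup (Fin 2) ℝ))
    (hfree : ∀ γ ∈ Γ, γ ≠ 1 → ∀ z ∈ UH, moebius γ z ≠ z)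
    (hdisc : ∀ K : Set ℂ, K ⊆ UH → IsCompact K →
      {γ : Matrix.SpecialLinearGroup (Fin 2) ℝ | γ ∈ Γ ∧ ((moebius γ '' K) ∩ K).Nonempty}.Finite)
    (hcocompact : ∃ K : Set ℂ, K ⊆ UH ∧ IsCompact K ∧ ∀ z ∈ UH, ∃ γ ∈ Γ, moebius γ z ∈ K)
    (φ : ℂ → ℂ) (hφ : DifferentiableOn ℂ φ UH)
    (hφeq : ∀ γ ∈ Γ, ∀ z ∈ UH,
      φ (moebius γ z) = (((γ 1 0 : ℝ) : ℂ) * z + ((γ 1 1 : ℝ) : ℂ)) ^ 4 * φ z)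
 :
    (∀ t : ℝ, 0 ≤ t → ∀ u : ℂ → ℝ, ContDiffOn ℝ 2 u UH → GammaInv Γ u → GaussEq φ t u →
      -(1 / 2) * Real.log (1 +
          (sSup ((fun z => t * z.im ^ 2 * ‖φ z‖ * Real.exp (-2 * u z)) '' UH)) ^ 2)
        ≤ sInf (u '' UH))
    ∧
    (∀ (t : ℕ → ℝ) (u : ℕ → ℂ → ℝ), (∀ n, 0 < t n) → Tendsto t atTop (nhds 0) →
      (∀ n, ContDiffOn ℝ 2 (u n) UH) → (∀ n, GammaInv Γ (u n)) →
      (∀ n, GaussEq φ (t n) (u n)) →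
      Tendsto (fun n => sSup ((fun z => |u n z|) '' UH)) atTop atTop →
      (Tendsto (fun n =>
          sSup ((fun z => t n * z.im ^ 2 * ‖φ z‖ * Real.exp (-2 * u n z)) '' UH))
          atTop atTop ∧
       Tendsto (fun n =>
          sSup ((fun z =>
            |(-1 : ℝ) - (t n * z.im ^ 2 * ‖φ z‖ * Real.exp (-2 * u n z)) ^ 2|) '' UH))
          atTop atTop)) := by
  obtain ⟨K, hKU, hKc, hcov⟩ := hcocompact
  constructor
  · intro t ht u hu hinv hgauss
    exact (main_aux hKU hKc hcov φ hφ hφeq t ht u hu hinv hgauss).2.1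
  · intro t u hpos htend hu hinv hgauss hblow
    have haux := fun n =>
      main_aux hKU hKc hcov φ hφ hφeq (t n) (hpos n).le (u n) (hu n) (hinv n) (hgauss n)
    set Λ : ℕ → ℝ := fun n =>
      sSup ((fun z => t n * z.im ^ 2 * ‖φ z‖ * Real.exp (-2 * u n z)) '' UH) with hΛ
    set S : ℕ → ℝ := fun n => sSup ((fun z => |u n z|) '' UH) with hSdef
    have hΛ0 : ∀ n, 0 ≤ Λ n := fun n => (haux n).1
    have hSle : ∀ n, S n ≤ (1 / 2) * Real.log (1 + Λ n ^ 2) := fun n => (haux n).2.2.1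
    have hbound : ∀ n, Real.exp (S n) - 1 ≤ Λ n := by
      intro n
      have h1 := hSle n
      have h2 : Real.exp (2 * S n) ≤ 1 + Λ n ^ 2 := by
        have h := Real.exp_le_exp.2 (show 2 * S n ≤ Real.log (1 + Λ n ^ 2) by linarith)
        rwa [Real.exp_log (by positivity)] at h
      have hE := Real.exp_pos (S n)
      have h3 : Real.exp (2 * S n) = Real.exp (S n) * Real.exp (S n) := by
        rw [two_mul, Real.exp_add]
      nlinarith [hΛ0 n]
    have hΛtend : Tendsto Λ atTop atTop := by
      apply tendsto_atTop_mono hbound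
      have h1 := Real.tendsto_exp_atTop.comp hblow
      have h2 := tendsto_atTop_add_const_right atTop (-1 : ℝ) h1
      convert h2 using 1
      funext n; exact sub_eq_add_neg _ _
    refine ⟨hΛtend, ?_⟩
    apply tendsto_atTop_mono (fun n => (haux n).2.2.2)
    have h2 := tendsto_atTop_add_const_right atTop (-1 : ℝ) hΛtend
    convert h2 using 1
    funext n; exact sub_eq_add_neg _ _

end
end

section
/- Let K : ℍ → ℝ be a continuous Γ-invariant function with K(z) ≤ −1 for all z ∈ ℍ. If u₁ and u₂ are Γ-invariant C² functions on ℍ satisfying the prescribed curvature equation −Δu_i − 1 = K(z) e^{2u_i} for i = 1, 2, then u₁ ≡ u₂. -/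
open Complex MeasureTheory Real Filter

noncomputable section

open Topology

/-- 1D second derivative test (necessary condition) at a local max. -/
lemma key1D {g g' : ℝ → ℝ} {d : ℝ}
    (hg' : ∀ᶠ t in 𝓝 (0:ℝ), HasDerivAt g (g' t) t)
    (hd : HasDerivAt g' d 0) (hmax : IsLocalMax g 0) : d ≤ 0 := by
  by_contra hcon
  push_neg at hcon
  have hg'0 : g' 0 = 0 := by
    have h1 : deriv g 0 = g' 0 := (hg'.self_of_nhds).deriv
    have h2 : deriv g 0 = 0 := hmax.deriv_eq_zero
    rw [← h1, h2]
  have hslope : Tendsto (slope g' 0) (𝓝[>] (0:ℝ)) (𝓝 d) :=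
    (hasDerivAt_iff_tendsto_slope.1 hd).mono_left
      (nhdsWithin_mono 0 (fun x hx => ne_of_gt hx))
  have hpos : ∀ᶠ t in 𝓝[>] (0:ℝ), 0 < g' t := by
    filter_upwards [hslope.eventually (lt_mem_nhds hcon), self_mem_nhdsWithin] with t hst ht
    have hts : slope g' 0 t = g' t / t := by
      simp [slope_def_field, hg'0]
    rw [hts] at hst
    have := mul_pos hst ht
    rwa [div_mul_cancel₀ _ (ne_of_gt ht)] at this
  have hcomb : ∀ᶠ t in 𝓝[>] (0:ℝ), 0 < g' t ∧ HasDerivAt g (g' t) t :=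
    hpos.and (hg'.filter_mono nhdsWithin_le_nhds)
  obtain ⟨ε, hε, hsub⟩ := mem_nhdsGT_iff_exists_Ioo_subset.1 hcomb
  have hε0 : (0:ℝ) < ε := hε
  have hsub' : Set.Icc (0:ℝ) (ε/2) \ {0} ⊆ Set.Ioo 0 ε := by
    rintro t ⟨⟨ht0, htε⟩, ht⟩
    exact ⟨lt_of_le_of_ne ht0 (Ne.symm ht), lt_of_le_of_lt htε (half_lt_self hε0)⟩
  have hmono : StrictMonoOn g (Set.Icc 0 (ε/2)) := by
    apply strictMonoOn_of_deriv_pos (convex_Icc 0 (ε/2))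
    · intro t ht
      by_cases h0 : t = 0
      · subst h0
        exact (hg'.self_of_nhds).continuousAt.continuousWithinAt
      · exact (hsub (hsub' ⟨ht, h0⟩)).2.continuousAt.continuousWithinAt
    · intro t ht
      rw [interior_Icc] at ht
      have h' := hsub ⟨ht.1, lt_trans ht.2 (half_lt_self hε0)⟩
      rw [h'.2.deriv]
      exact h'.1
  have hmem : Set.Ioo (0:ℝ) (ε/2) ∈ 𝓝[>] (0:ℝ) :=
    mem_nhdsGT_iff_exists_Ioo_subset.2 ⟨ε/2, half_pos hε0, subset_rfl⟩
  have : ∀ᶠ t in 𝓝[>] (0:ℝ), g t ≤ g 0 ∧ t ∈ Set.Ioo (0:ℝ) (ε/2) :=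
    (hmax.filter_mono nhdsWithin_le_nhds).and (eventually_mem_set.2 hmem)
  obtain ⟨t, hle, ht⟩ := this.exists
  have : g 0 < g t :=
    hmono ⟨le_refl 0, le_of_lt (half_pos hε0)⟩ ⟨le_of_lt ht.1, le_of_lt ht.2⟩ ht.1
  linarith

/-- Second derivative test in direction `v` at a local max. -/
lemma secondDir_nonpos {f : ℂ → ℝ} {z₀ : ℂ} (v : ℂ)
    (hf : ContDiffAt ℝ 2 f z₀) (hmax : IsLocalMax f z₀) :
    iteratedFDeriv ℝ 2 f z₀ ![v, v] ≤ 0 := by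
  set L : ℝ → ℂ := fun t => z₀ + t • v with hLdef
  have hL0 : L 0 = z₀ := by simp [hLdef]
  have hL : ∀ t : ℝ, HasDerivAt L v t := by
    intro t
    have h1 : HasDerivAt (fun t : ℝ => t • v) ((1:ℝ) • v) t :=
      (hasDerivAt_id t).smul_const v
    have h2 := h1.const_add z₀
    rw [one_smul] at h2
    exact h2
  have hLc : Continuous L := by fun_prop
  have hLt : Tendsto L (𝓝 0) (𝓝 z₀) := by
    rw [← hL0]; exact hLc.continuousAt
  have hmaxg : IsLocalMax (f ∘ L) 0 := by
    have := hmax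
    rw [← hL0] at this
    exact this.comp_tendsto (hL0 ▸ hLt)
  have hev : ∀ᶠ z in 𝓝 z₀, ContDiffAt ℝ 2 f z := hf.eventually (by norm_num)
  have hg' : ∀ᶠ t in 𝓝 (0:ℝ), HasDerivAt (f ∘ L) (fderiv ℝ f (L t) v) t := by
    filter_upwards [hLt.eventually hev] with t ht
    exact (ht.differentiableAt (by norm_num)).hasFDerivAt.comp_hasDerivAt t (hL t)
  have hF : HasFDerivAt (fderiv ℝ f) (fderiv ℝ (fderiv ℝ f) z₀) z₀ :=
    ((hf.fderiv_right (m := 1) (le_refl _)).differentiableAt (by norm_num)).hasFDerivAt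
  have h2 : HasDerivAt (fun t => fderiv ℝ f (L t)) (fderiv ℝ (fderiv ℝ f) z₀ v) 0 := by
    have hF' : HasFDerivAt (fderiv ℝ f) (fderiv ℝ (fderiv ℝ f) z₀) (L 0) := by
      rw [hL0]; exact hF
    have := hF'.comp_hasDerivAt 0 (hL 0)
    exact this
  have h3 : HasDerivAt (fun t => fderiv ℝ f (L t) v) (fderiv ℝ (fderiv ℝ f) z₀ v v) 0 :=
    (ContinuousLinearMap.apply ℝ ℝ v).hasFDerivAt.comp_hasDerivAt 0 h2
  have := key1D hg' h3 hmaxg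
  rw [iteratedFDeriv_two_apply]
  simpa using this

/-- Second iterated derivative of a difference, at a point where both are `C²`. -/
lemma itfd2_sub {f g : ℂ → ℝ} {z : ℂ} (hf : ContDiffAt ℝ 2 f z) (hg : ContDiffAt ℝ 2 g z)
    (v w : ℂ) :
    iteratedFDeriv ℝ 2 (fun x => f x - g x) z ![v, w]
      = iteratedFDeriv ℝ 2 f z ![v, w] - iteratedFDeriv ℝ 2 g z ![v, w] := by
  rw [iteratedFDeriv_two_apply, iteratedFDeriv_two_apply, iteratedFDeriv_two_apply]
  have hev : (fun x => fderiv ℝ (fun x => f x - g x) x)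
      =ᶠ[𝓝 z] (fun x => fderiv ℝ f x - fderiv ℝ g x) := by
    filter_upwards [hf.eventually (by norm_num), hg.eventually (by norm_num)] with x hfx hgx
    exact fderiv_sub (hfx.differentiableAt (by norm_num)) (hgx.differentiableAt (by norm_num))
  have h1 : fderiv ℝ (fderiv ℝ (fun x => f x - g x)) z
      = fderiv ℝ (fun x => fderiv ℝ f x - fderiv ℝ g x) z := hev.fderiv_eq
  have hdf : DifferentiableAt ℝ (fderiv ℝ f) z :=
    (hf.fderiv_right (m := 1) (le_refl _)).differentiableAt (by norm_num)
  have hdg : DifferentiableAt ℝ (fderiv ℝ g) z :=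
    (hg.fderiv_right (m := 1) (le_refl _)).differentiableAt (by norm_num)
  rw [h1, fderiv_fun_sub hdf hdg]
  simp

/-- Main comparison lemma: one-sided inequality. -/
lemma main_le
    (Γ : Subgroup (Matrix.SpecialLinearGroup (Fin 2) ℝ))
    (hcocompact : ∃ K : Set ℂ, K ⊆ UH ∧ IsCompact K ∧ ∀ z ∈ UH, ∃ γ ∈ Γ, moebius γ z ∈ K)
    (K : ℂ → ℝ) (hKneg : ∀ z ∈ UH, K z ≤ -1)
    (u₁ u₂ : ℂ → ℝ)
    (hu₁ : ContDiffOn ℝ 2 u₁ UH) (hu₁inv : GammaInv Γ u₁)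
    (hu₂ : ContDiffOn ℝ 2 u₂ UH) (hu₂inv : GammaInv Γ u₂)
    (heq₁ : ∀ z ∈ UH, -hypLap u₁ z - 1 = K z * Real.exp (2 * u₁ z))
    (heq₂ : ∀ z ∈ UH, -hypLap u₂ z - 1 = K z * Real.exp (2 * u₂ z)) :
    ∀ z ∈ UH, u₁ z ≤ u₂ z := by
  intro z hz
  obtain ⟨K₀, hK₀sub, hK₀cpt, hK₀cov⟩ := hcocompact
  set w : ℂ → ℝ := fun x => u₁ x - u₂ x with hwdef
  have hK₀ne : K₀.Nonempty := by
    obtain ⟨γ, _, hγ⟩ := hK₀cov z hz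
    exact ⟨_, hγ⟩
  have hwc : ContinuousOn w UH := (hu₁.continuousOn).sub (hu₂.continuousOn)
  obtain ⟨z₀, hz₀K, hmaxK⟩ := hK₀cpt.exists_isMaxOn hK₀ne (hwc.mono hK₀sub)
  have hz₀ : z₀ ∈ UH := hK₀sub hz₀K
  have hglobal : ∀ x ∈ UH, w x ≤ w z₀ := by
    intro x hx
    obtain ⟨γ, hγΓ, hγ⟩ := hK₀cov x hx
    have hwx : w (moebius γ x) = w x := by
      simp only [hwdef, hu₁inv γ hγΓ x hx, hu₂inv γ hγΓ x hx]
    calc w x = w (moebius γ x) := hwx.symm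
      _ ≤ w z₀ := hmaxK hγ
  suffices h : w z₀ ≤ 0 by
    have := hglobal z hz
    simp only [hwdef] at this h ⊢
    linarith
  by_contra hpos
  push_neg at hpos
  have hloc : IsLocalMax w z₀ := by
    filter_upwards [UH_open.mem_nhds hz₀] with x hx using hglobal x hx
  have hcd1 : ContDiffAt ℝ 2 u₁ z₀ := hu₁.contDiffAt (UH_open.mem_nhds hz₀)
  have hcd2 : ContDiffAt ℝ 2 u₂ z₀ := hu₂.contDiffAt (UH_open.mem_nhds hz₀)
  have hw : ContDiffAt ℝ 2 w z₀ := hcd1.sub hcd2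
  have h1 := secondDir_nonpos 1 hw hloc
  have hI := secondDir_nonpos Complex.I hw hloc
  rw [itfd2_sub hcd1 hcd2] at h1 hI
  have hlap : hypLap u₁ z₀ - hypLap u₂ z₀ ≤ 0 := by
    unfold hypLap
    nlinarith [sq_nonneg z₀.im]
  have e1 := heq₁ z₀ hz₀
  have e2 := heq₂ z₀ hz₀
  have hKz := hKneg z₀ hz₀
  have hu21 : u₂ z₀ < u₁ z₀ := by
    simp only [hwdef] at hpos; linarith
  have hexp : Real.exp (2 * u₂ z₀) < Real.exp (2 * u₁ z₀) :=
    Real.exp_lt_exp.2 (by linarith)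
  have hkey : Real.exp (2 * u₁ z₀) - Real.exp (2 * u₂ z₀)
      ≤ (-K z₀) * (Real.exp (2 * u₁ z₀) - Real.exp (2 * u₂ z₀)) := by
    nlinarith
  nlinarith

theorem prescribed_negative_curvature_uniqueness
    (Γ : Subgroup (Matrix.SpecialLinearGroup (Fin 2) ℝ))
    (hfree : ∀ γ ∈ Γ, γ ≠ 1 → ∀ z ∈ UH, moebius γ z ≠ z)
    (hdisc : ∀ K : Set ℂ, K ⊆ UH → IsCompact K →
      {γ : Matrix.SpecialLinearGroup (Fin 2) ℝ | γ ∈ Γ ∧ ((moebius γ '' K) ∩ K).Nonempty}.Finite)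
    (hcocompact : ∃ K : Set ℂ, K ⊆ UH ∧ IsCompact K ∧ ∀ z ∈ UH, ∃ γ ∈ Γ, moebius γ z ∈ K)
    (K : ℂ → ℝ) (hKcont : ContinuousOn K UH) (hKinv : GammaInv Γ K)
    (hKneg : ∀ z ∈ UH, K z ≤ -1)
    (u₁ u₂ : ℂ → ℝ)
    (hu₁ : ContDiffOn ℝ 2 u₁ UH) (hu₁inv : GammaInv Γ u₁)
    (hu₂ : ContDiffOn ℝ 2 u₂ UH) (hu₂inv : GammaInv Γ u₂)
    (heq₁ : ∀ z ∈ UH, -hypLap u₁ z - 1 = K z * Real.exp (2 * u₁ z))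
    (heq₂ : ∀ z ∈ UH, -hypLap u₂ z - 1 = K z * Real.exp (2 * u₂ z)) :
    ∀ z ∈ UH, u₁ z = u₂ z := by
  intro z hz
  have h1 := main_le Γ hcocompact K hKneg u₁ u₂ hu₁ hu₁inv hu₂ hu₂inv heq₁ heq₂ z hz
  have h2 := main_le Γ hcocompact K hKneg u₂ u₁ hu₂ hu₂inv hu₁ hu₁inv heq₂ heq₁ z hz
  linarith

end
end

section
/- Let t > 0 and set V(z) = t²y⁴|φ(z)|². Let f₁, f₂ : ℝ → ℝ be continuous functions satisfying: f₁(s) = 1 − e^{2s} for s ≤ 0 and f₁(s) < 0 for all s > 0; f₂(s) = s − e^{−2s} for s ≤ 0 and f₂(s) ≤ 0 for all s ∈ ℝ. Then a Γ-invariant C² function u : ℍ → ℝ solves the Gauss equation Δu + 1 − e^{2u} − V(z)e^{−2u} = 0 if and only if it solves the modified equation Δu − V(z)·u + f₁(u) + V(z)·f₂(u) = 0; i.e., the solution sets of the two equations coincide. -/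
open Complex MeasureTheory Real Filter Topology

lemma second_directional_nonpos {u : ℂ → ℝ} {z₀ : ℂ}
    (hu : ContDiffAt ℝ 2 u z₀) (hmax : IsLocalMax u z₀) (v : ℂ) :
    fderiv ℝ (fderiv ℝ u) z₀ v v ≤ 0 := by
  by_contra hpos
  push_neg at hpos
  set B := fderiv ℝ (fderiv ℝ u) z₀ with hBdef
  have hL : ∀ s : ℝ, HasDerivAt (fun s : ℝ => z₀ + s • v) v s := fun s => by
    simpa using ((hasDerivAt_id s).smul_const v).const_add z₀
  have hBd : HasFDerivAt (fderiv ℝ u) B z₀ :=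
    ((hu.fderiv_right (m := 1) (by norm_num)).differentiableAt one_ne_zero).hasFDerivAt
  set G : ℝ → ℝ := fun s => fderiv ℝ u (z₀ + s • v) v with hGdef
  have hBd' : HasFDerivAt (fderiv ℝ u) B (z₀ + (0:ℝ) • v) := by simpa using hBd
  have h1 : HasDerivAt (fun s : ℝ => fderiv ℝ u (z₀ + s • v)) (B v) 0 :=
    hBd'.comp_hasDerivAt 0 (hL 0)
  have hG : HasDerivAt G (B v v) 0 := by
    simpa [hGdef] using h1.clm_apply (hasDerivAt_const 0 v)
  have hG0 : G 0 = 0 := by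
    simp [hGdef, hmax.fderiv_eq_zero]
  have hcont : Tendsto (fun s : ℝ => z₀ + s • v) (𝓝 0) (𝓝 z₀) := by
    simpa using (hL 0).continuousAt.tendsto
  have hev1 : ∀ᶠ s in 𝓝 (0:ℝ), HasDerivAt (fun r : ℝ => u (z₀ + r • v)) (G s) s := by
    filter_upwards [hcont.eventually (hu.eventually (by norm_num))] with s hs
    exact (hs.differentiableAt (by norm_num)).hasFDerivAt.comp_hasDerivAt s (hL s)
  have hev2 : ∀ᶠ s in 𝓝 (0:ℝ), u (z₀ + s • v) ≤ u z₀ := hcont.eventually hmax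
  have hslope : ∀ᶠ s in 𝓝 (0:ℝ), s ≠ 0 → 0 < slope G 0 s := by
    have := (hasDerivAt_iff_tendsto_slope.1 hG).eventually (eventually_gt_nhds hpos)
    rwa [eventually_nhdsWithin_iff] at this
  obtain ⟨ε, hε, hball⟩ := Metric.eventually_nhds_iff.1 ((hev1.and hev2).and hslope)
  set b : ℝ := ε / 2 with hb
  have hb0 : 0 < b := by positivity
  have hmem : ∀ s ∈ Set.Icc (0:ℝ) b, dist s (0:ℝ) < ε := by
    intro s hs
    rw [Real.dist_eq, sub_zero, _root_.abs_of_nonneg hs.1]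
    have h2 := hs.2
    rw [hb] at h2; linarith
  obtain ⟨c, hc, hceq⟩ := exists_hasDerivAt_eq_slope (fun r : ℝ => u (z₀ + r • v)) G hb0
    (fun s hs => ((hball (hmem s hs)).1.1).continuousAt.continuousWithinAt)
    (fun s hs => (hball (hmem s (Set.mem_Icc_of_Ioo hs))).1.1)
  have hcd : dist c (0:ℝ) < ε := hmem c ⟨hc.1.le, hc.2.le⟩
  have hGc : 0 < G c := by
    have h := (hball hcd).2 (ne_of_gt hc.1)
    rw [slope_def_field, hG0, sub_zero, sub_zero] at h
    exact (div_pos_iff.1 h).resolve_right (fun h' => absurd hc.1 (not_lt.2 h'.2.le)) |>.1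
  have hub : u (z₀ + b • v) ≤ u z₀ :=
    (hball (hmem b ⟨hb0.le, le_refl b⟩)).1.2
  have h0 : u (z₀ + (0:ℝ) • v) = u z₀ := by simp
  rw [hceq] at hGc
  simp only [sub_zero, h0] at hGc
  have := (div_pos_iff.1 hGc).resolve_right (fun h' => absurd hb0 (not_lt.2 h'.2.le)) |>.1
  linarith
noncomputable section

theorem gauss_equation_equivalent_to_modified_equation
    (Γ : Subgroup (Matrix.SpecialLinearGroup (Fin 2) ℝ))
    (hfree : ∀ γ ∈ Γ, γ ≠ 1 → ∀ z ∈ UH, moebius γ z ≠ z)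
    (hdisc : ∀ K : Set ℂ, K ⊆ UH → IsCompact K →
      {γ : Matrix.SpecialLinearGroup (Fin 2) ℝ | γ ∈ Γ ∧ ((moebius γ '' K) ∩ K).Nonempty}.Finite)
    (hcocompact : ∃ K : Set ℂ, K ⊆ UH ∧ IsCompact K ∧ ∀ z ∈ UH, ∃ γ ∈ Γ, moebius γ z ∈ K)
    (φ : ℂ → ℂ) (hφ : DifferentiableOn ℂ φ UH)
    (hφeq : ∀ γ ∈ Γ, ∀ z ∈ UH,
      φ (moebius γ z) = (((γ 1 0 : ℝ) : ℂ) * z + ((γ 1 1 : ℝ) : ℂ)) ^ 4 * φ z)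
    (t : ℝ) (ht : 0 < t)
    (f₁ f₂ : ℝ → ℝ) (hf₁cont : Continuous f₁) (hf₂cont : Continuous f₂)
    (hf₁eq : ∀ s ≤ (0 : ℝ), f₁ s = 1 - Real.exp (2 * s))
    (hf₁neg : ∀ s > (0 : ℝ), f₁ s < 0)
    (hf₂eq : ∀ s ≤ (0 : ℝ), f₂ s = s - Real.exp (-2 * s))
    (hf₂nonpos : ∀ s : ℝ, f₂ s ≤ 0)
    (u : ℂ → ℝ) (hu : ContDiffOn ℝ 2 u UH) (huinv : GammaInv Γ u) :
    GaussEq φ t u ↔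
      ∀ z ∈ UH, hypLap u z - (t ^ 2 * z.im ^ 4 * ‖φ z‖ ^ 2) * u z
        + f₁ (u z) + (t ^ 2 * z.im ^ 4 * ‖φ z‖ ^ 2) * f₂ (u z) = 0 := by
  obtain ⟨K, hKU, hKc, hKcov⟩ := hcocompact
  have hIU : Complex.I ∈ UH := by simp [UH]
  have hKne : K.Nonempty := by
    obtain ⟨γ, _, hγ⟩ := hKcov _ hIU
    exact ⟨_, hγ⟩
  have hucont : ContinuousOn u UH := hu.continuousOn
  obtain ⟨z₀, hz₀K, hz₀max⟩ := hKc.exists_isMaxOn hKne (hucont.mono hKU)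
  have hz₀U : z₀ ∈ UH := hKU hz₀K
  have hglob : ∀ z ∈ UH, u z ≤ u z₀ := by
    intro z hz
    obtain ⟨γ, hγ, hγK⟩ := hKcov z hz
    have h := huinv γ hγ z hz
    calc u z = u (moebius γ z) := h.symm
    _ ≤ u z₀ := hz₀max hγK
  have hUopen : IsOpen UH := isOpen_lt continuous_const Complex.continuous_im
  have hmax : IsLocalMax u z₀ := by
    filter_upwards [hUopen.mem_nhds hz₀U] with z hz using hglob z hz
  have hCD : ContDiffAt ℝ 2 u z₀ := hu.contDiffAt (hUopen.mem_nhds hz₀U)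
  have hlap : hypLap u z₀ ≤ 0 := by
    have h1 := second_directional_nonpos hCD hmax 1
    have h2 := second_directional_nonpos hCD hmax Complex.I
    unfold hypLap
    rw [iteratedFDeriv_two_apply, iteratedFDeriv_two_apply]
    simp only [Matrix.cons_val_zero, Matrix.cons_val_one, Matrix.head_cons]
    nlinarith [sq_nonneg z₀.im]
  have hV : ∀ z : ℂ, 0 ≤ t ^ 2 * z.im ^ 4 * ‖φ z‖ ^ 2 := by
    intro z; positivity
  constructor
  · intro hG z hz
    have hM : u z₀ ≤ 0 := by
      by_contra hM
      push_neg at hM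
      have hE := hG z₀ hz₀U
      have h1 : 2 * u z₀ + 1 ≤ Real.exp (2 * u z₀) := Real.add_one_le_exp _
      have h2 : 0 < Real.exp (-2 * u z₀) := Real.exp_pos _
      nlinarith [mul_nonneg (hV z₀) h2.le]
    have hle : u z ≤ 0 := (hglob z hz).trans hM
    rw [hf₁eq _ hle, hf₂eq _ hle]
    linear_combination hG z hz
  · intro hMod z hz
    have hM : u z₀ ≤ 0 := by
      by_contra hM
      push_neg at hM
      have hE := hMod z₀ hz₀U
      have h1 : f₁ (u z₀) < 0 := hf₁neg _ hM
      have h2 : t ^ 2 * z₀.im ^ 4 * ‖φ z₀‖ ^ 2 * f₂ (u z₀) ≤ 0 :=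
        mul_nonpos_of_nonneg_of_nonpos (hV z₀) (hf₂nonpos _)
      nlinarith [mul_nonneg (hV z₀) hM.le]
    have hle : u z ≤ 0 := (hglob z hz).trans hM
    have hE := hMod z hz
    rw [hf₁eq _ hle, hf₂eq _ hle] at hE
    linear_combination hE

end
end

section
/- Let A be a real symmetric 2×2 matrix and v ∈ ℝ, and define the matrix-valued function g : ℝ → M₂(ℝ) by g(r) = e^{2v}·(cosh(r)·I + sinh(r)·e^{−2v}·A)², where I is the 2×2 identity matrix. Then for every r ∈ ℝ at which g(r) is invertible, g satisfies the second-order matrix ODE (1/2)·g''(r) − (1/4)·g'(r)·g(r)⁻¹·g'(r) = g(r), where derivatives are taken entrywise. -/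
open Real

noncomputable section

/-- Entrywise derivative of a matrix-valued function of a real variable. -/
noncomputable def mderiv (g : ℝ → Matrix (Fin 2) (Fin 2) ℝ) (r : ℝ) :
    Matrix (Fin 2) (Fin 2) ℝ :=
  Matrix.of fun i j => deriv (fun s => g s i j) r

namespace NBode

variable (A : Matrix (Fin 2) (Fin 2) ℝ) (v : ℝ)

/-- `B(r) = cosh r • I + sinh r • e^{-2v} • A` -/
noncomputable def b (r : ℝ) : Matrix (Fin 2) (Fin 2) ℝ :=
  Real.cosh r • (1 : Matrix (Fin 2) (Fin 2) ℝ) + Real.sinh r • (Real.exp (-2 * v) • A)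

/-- derivative of `b` -/
noncomputable def db (r : ℝ) : Matrix (Fin 2) (Fin 2) ℝ :=
  Real.sinh r • (1 : Matrix (Fin 2) (Fin 2) ℝ) + Real.cosh r • (Real.exp (-2 * v) • A)

lemma hb (r : ℝ) (i j : Fin 2) :
    HasDerivAt (fun s => b A v s i j) (db A v r i j) r := by
  have h := ((Real.hasDerivAt_cosh r).mul_const ((1 : Matrix (Fin 2) (Fin 2) ℝ) i j)).fun_add
    ((Real.hasDerivAt_sinh r).mul_const ((Real.exp (-2 * v) • A) i j))
  simpa [b, db, Matrix.add_apply, Matrix.smul_apply, smul_eq_mul] using h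

lemma hdb (r : ℝ) (i j : Fin 2) :
    HasDerivAt (fun s => db A v s i j) (b A v r i j) r := by
  have h := ((Real.hasDerivAt_sinh r).mul_const ((1 : Matrix (Fin 2) (Fin 2) ℝ) i j)).fun_add
    ((Real.hasDerivAt_cosh r).mul_const ((Real.exp (-2 * v) • A) i j))
  simpa [b, db, Matrix.add_apply, Matrix.smul_apply, smul_eq_mul] using h

lemma hbb (r : ℝ) (i j : Fin 2) :
    HasDerivAt (fun s => (b A v s * b A v s) i j)
      ((db A v r * b A v r + b A v r * db A v r) i j) r := by
  have h : HasDerivAt (fun s => ∑ k : Fin 2, b A v s i k * b A v s k j)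
      (∑ k : Fin 2, (db A v r i k * b A v r k j + b A v r i k * db A v r k j)) r :=
    HasDerivAt.fun_sum (fun k _ => (hb A v r i k).fun_mul (hb A v r k j))
  simpa [Matrix.mul_apply, Matrix.add_apply, Finset.sum_add_distrib] using h

lemma hdbb (r : ℝ) (i j : Fin 2) :
    HasDerivAt (fun s => (db A v s * b A v s + b A v s * db A v s) i j)
      (((b A v r * b A v r + db A v r * db A v r)
        + (db A v r * db A v r + b A v r * b A v r)) i j) r := by
  have h1 : HasDerivAt (fun s => ∑ k : Fin 2, db A v s i k * b A v s k j)
      (∑ k : Fin 2, (b A v r i k * b A v r k j + db A v r i k * db A v r k j)) r :=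
    HasDerivAt.fun_sum (fun k _ => (hdb A v r i k).fun_mul (hb A v r k j))
  have h2 : HasDerivAt (fun s => ∑ k : Fin 2, b A v s i k * db A v s k j)
      (∑ k : Fin 2, (db A v r i k * db A v r k j + b A v r i k * b A v r k j)) r :=
    HasDerivAt.fun_sum (fun k _ => (hb A v r i k).fun_mul (hdb A v r k j))
  have h := h1.fun_add h2
  simpa [Matrix.mul_apply, Matrix.add_apply, Finset.sum_add_distrib] using h

end NBode

open NBode

theorem normal_bundle_metric_ode
    (A : Matrix (Fin 2) (Fin 2) ℝ) (hA : A.IsSymm) (v : ℝ)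
    (g : ℝ → Matrix (Fin 2) (Fin 2) ℝ)
    (hg : ∀ r : ℝ, g r = Real.exp (2 * v) •
      (Real.cosh r • (1 : Matrix (Fin 2) (Fin 2) ℝ)
        + Real.sinh r • (Real.exp (-2 * v) • A)) ^ 2) :
    ∀ r : ℝ, IsUnit (g r) →
      (1 / 2 : ℝ) • mderiv (mderiv g) r
        - (1 / 4 : ℝ) • (mderiv g r * (g r)⁻¹ * mderiv g r) = g r := by
  intro r hr
  have hg' : ∀ s : ℝ, g s = Real.exp (2 * v) • (b A v s * b A v s) := by
    intro s; rw [hg s]; rw [sq]; rfl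
  -- first derivative
  have hd1 : ∀ s : ℝ, mderiv g s
      = Real.exp (2 * v) • (db A v s * b A v s + b A v s * db A v s) := by
    intro s
    ext i j
    show deriv (fun t => g t i j) s = _
    have heq : (fun t => g t i j)
        = fun t => Real.exp (2 * v) * ((b A v t * b A v t) i j) := by
      funext t; rw [hg' t]; simp [Matrix.smul_apply, smul_eq_mul]
    rw [heq, ((hbb A v s i j).const_mul (Real.exp (2 * v))).deriv]
    simp [Matrix.smul_apply, smul_eq_mul]
  -- second derivative
  have hd2 : mderiv (mderiv g) r
      = Real.exp (2 * v) • ((b A v r * b A v r + db A v r * db A v r)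
        + (db A v r * db A v r + b A v r * b A v r)) := by
    ext i j
    show deriv (fun t => mderiv g t i j) r = _
    have heq : (fun t => mderiv g t i j)
        = fun t => Real.exp (2 * v)
            * ((db A v t * b A v t + b A v t * db A v t) i j) := by
      funext t; rw [hd1 t]; simp [Matrix.smul_apply, smul_eq_mul]
    rw [heq, ((hdbb A v r i j).const_mul (Real.exp (2 * v))).deriv]
    simp [Matrix.smul_apply, smul_eq_mul]
  set B := b A v r with hB
  set D := db A v r with hD
  set e := Real.exp (2 * v) with he
  -- commutation of B and D
  have hcomm : B * D = D * B := by
    simp only [hB, hD, b, db, add_mul, mul_add, Matrix.smul_mul, Matrix.mul_smul,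
      Matrix.one_mul, Matrix.mul_one]
    module
  have cBD : Commute B D := hcomm
  -- units
  obtain ⟨u, hu⟩ := hr
  have cBg : Commute B (g r) := by
    rw [hg' r]
    exact ((Commute.refl B).mul_right (Commute.refl B)).smul_right e
  have cDg : Commute D (g r) := by
    rw [hg' r]
    exact ((cBD.symm).mul_right cBD.symm).smul_right e
  have cBgi : Commute B (g r)⁻¹ := by
    rw [← hu, ← Matrix.coe_units_inv]
    exact Commute.units_inv_right (by rw [hu]; exact cBg)
  have cDgi : Commute D (g r)⁻¹ := by
    rw [← hu, ← Matrix.coe_units_inv]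
    exact Commute.units_inv_right (by rw [hu]; exact cDg)
  have hdet : IsUnit (g r).det := (Matrix.isUnit_iff_isUnit_det _).mp ⟨u, hu⟩
  have hginv : g r * (g r)⁻¹ = 1 := Matrix.mul_nonsing_inv _ hdet
  -- key : B * g⁻¹ * B = e⁻¹ • 1
  have hkey : B * (g r)⁻¹ * B
      = Real.exp (-(2 * v)) • (1 : Matrix (Fin 2) (Fin 2) ℝ) := by
    have hB2 : B * B = Real.exp (-(2 * v)) • g r := by
      rw [hg' r, smul_smul, ← Real.exp_add]
      simp
      rfl
    calc B * (g r)⁻¹ * B = B * B * (g r)⁻¹ := by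
          rw [mul_assoc, ← cBgi.eq, ← mul_assoc]
      _ = Real.exp (-(2 * v)) • (g r * (g r)⁻¹) := by rw [hB2, Matrix.smul_mul]
      _ = _ := by rw [hginv]
  -- rearrangement
  have hre : D * B * (g r)⁻¹ * (D * B) = D * D * (B * (g r)⁻¹ * B) := by
    calc D * B * (g r)⁻¹ * (D * B) = D * B * ((g r)⁻¹ * D) * B := by noncomm_ring
      _ = D * B * (D * (g r)⁻¹) * B := by rw [cDgi.symm.eq]
      _ = D * (B * D) * ((g r)⁻¹ * B) := by noncomm_ring
      _ = D * (D * B) * ((g r)⁻¹ * B) := by rw [hcomm]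
      _ = D * D * (B * (g r)⁻¹ * B) := by noncomm_ring
  -- middle term
  have hmid : mderiv g r * (g r)⁻¹ * mderiv g r = (4 * e) • (D * D) := by
    rw [hd1 r, ← hB, ← hD, hcomm]
    have h2 : e • (D * B + D * B) = (2 * e) • (D * B) := by module
    rw [h2, Matrix.smul_mul, Matrix.smul_mul, Matrix.mul_smul, smul_smul, hre, hkey,
      Matrix.mul_smul, mul_one, smul_smul]
    congr 1
    have hee : e * Real.exp (-(2 * v)) = 1 := by
      rw [he, ← Real.exp_add]; ring_nf; exact Real.exp_zero
    linear_combination (4 * e) * hee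
  rw [hd2, hmid, hg' r, ← hB]
  module

end
end
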